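/- Let p(s), q₁(s), …, q_r(s) ∈ L[s] be nonzero polynomials over a field L with gcd(p, q₁, …, q_r) = 1 and p monic. Let F₂ be the subfield of L generated (over the prime field, or over ℂ if L is a ℂ-algebra field) by all coefficients of the reduced-form rational functions h_i = q_i/p (i.e., coefficients of q_i/gcd(p,q_i) and of p/gcd(p,q_i), the latter taken monic). Then the coefficients of p and of all q_i lie in F₂. -/
import Mathlib


open Polynomial

/-- The monic-normalized gcd of two polynomials over a field. -/
noncomputable def monicGcd {L : Type*} [Field L] [DecidableEq L] (a b : L[X]) : L[X] :=
  C (EuclideanDomain.gcd a b).leadingCoeff⁻¹ * EuclideanDomain.gcd a b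

/-- One direction of the transfer-function lemma: if `p` is monic, all `qᵢ`
are nonzero, and `gcd(p, q₁, …, q_r) = 1`, then the coefficients of `p` and
of all the `qᵢ` lie in the subfield generated by the coefficients of the
reduced forms `qᵢ / gcd(p, qᵢ)` and `p / gcd(p, qᵢ)`. -/
theorem coeffs_in_field_of_reduced_forms {L : Type*} [Field L] [DecidableEq L]
    (r : ℕ) (p : L[X]) (q : Fin r → L[X])
    (hp : p.Monic) (hq : ∀ i, q i ≠ 0)
    (hgcd : ∀ d : L[X], d ∣ p → (∀ i, d ∣ q i) → IsUnit d)
    (F₂ : Subfield L)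
    (hF₂ : F₂ = Subfield.closure
      ((⋃ i, {x | ∃ n, ((q i) / monicGcd p (q i)).coeff n = x}) ∪
       (⋃ i, {x | ∃ n, (p / monicGcd p (q i)).coeff n = x}))) :
    (∀ n, p.coeff n ∈ F₂) ∧ ∀ i n, (q i).coeff n ∈ F₂ := by
  classical
  have hp0 : p ≠ 0 := hp.ne_zero
  set f : F₂ →+* L := F₂.subtype with hf
  let Mem : L[X] → Prop := fun u => ∃ U : Polynomial F₂, U.map f = u
  have memCoeff : ∀ u, Mem u → ∀ n, u.coeff n ∈ F₂ := by
    rintro u ⟨U, rfl⟩ n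
    rw [Polynomial.coeff_map]
    exact (U.coeff n).2
  have coeffMem : ∀ u : L[X], (∀ n, u.coeff n ∈ F₂) → Mem u := by
    intro u hu
    have : u ∈ Polynomial.lifts f := by
      rw [Polynomial.lifts_iff_coeff_lifts]
      exact fun n => ⟨⟨u.coeff n, hu n⟩, rfl⟩
    exact (Polynomial.mem_lifts u).1 this
  have memMul : ∀ a b, Mem a → Mem b → Mem (a * b) := by
    rintro a b ⟨A, rfl⟩ ⟨B, rfl⟩
    exact ⟨A * B, by rw [Polynomial.map_mul]⟩
  have memDiv : ∀ a b, Mem a → Mem b → Mem (a / b) := by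
    rintro a b ⟨A, rfl⟩ ⟨B, rfl⟩
    exact ⟨A / B, by rw [Polynomial.map_div]⟩
  have memGcd : ∀ a b, Mem a → Mem b → Mem (EuclideanDomain.gcd a b) := by
    rintro a b ⟨A, rfl⟩ ⟨B, rfl⟩
    exact ⟨EuclideanDomain.gcd A B, by rw [← Polynomial.gcd_map]⟩
  have memLcm : ∀ a b, Mem a → Mem b → Mem (EuclideanDomain.lcm a b) := by
    intro a b ha hb
    exact memDiv _ _ (memMul _ _ ha hb) (memGcd _ _ ha hb)
  -- basic facts about the monic gcds
  set g : Fin r → L[X] := fun i => monicGcd p (q i) with hgdef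
  have hgcd0 : ∀ i, EuclideanDomain.gcd p (q i) ≠ 0 := by
    intro i h
    exact hp0 (EuclideanDomain.gcd_eq_zero_iff.1 h).1
  have hlc0 : ∀ i, (EuclideanDomain.gcd p (q i)).leadingCoeff ≠ 0 := fun i =>
    Polynomial.leadingCoeff_ne_zero.2 (hgcd0 i)
  have hgmul : ∀ i, g i * C (EuclideanDomain.gcd p (q i)).leadingCoeff
      = EuclideanDomain.gcd p (q i) := by
    intro i
    show C (EuclideanDomain.gcd p (q i)).leadingCoeff⁻¹ * EuclideanDomain.gcd p (q i)
        * C (EuclideanDomain.gcd p (q i)).leadingCoeff = _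
    rw [mul_right_comm, ← C_mul, inv_mul_cancel₀ (hlc0 i), C_1, one_mul]
  have hgdvdgcd : ∀ i, g i ∣ EuclideanDomain.gcd p (q i) := fun i => ⟨_, (hgmul i).symm⟩
  have hgdvdp : ∀ i, g i ∣ p := fun i =>
    (hgdvdgcd i).trans (EuclideanDomain.gcd_dvd_left _ _)
  have hgdvdq : ∀ i, g i ∣ q i := fun i =>
    (hgdvdgcd i).trans (EuclideanDomain.gcd_dvd_right _ _)
  have hg0 : ∀ i, g i ≠ 0 := by
    intro i h
    apply hgcd0 i
    rw [← hgmul i, h, zero_mul]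
  -- the reduced numerators and denominators
  set b : Fin r → L[X] := fun i => p / g i with hbdef
  have hpb : ∀ i, g i * b i = p := fun i => EuclideanDomain.mul_div_cancel' (hg0 i) (hgdvdp i)
  have hb0 : ∀ i, b i ≠ 0 := by
    intro i h
    apply hp0
    rw [← hpb i, h, mul_zero]
  have memb : ∀ i, Mem (b i) := by
    intro i
    apply coeffMem
    intro n
    rw [hF₂]
    apply Subfield.subset_closure
    right
    exact Set.mem_iUnion.2 ⟨i, n, rfl⟩
  have mema : ∀ i, Mem (q i / g i) := by
    intro i
    apply coeffMem
    intro n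
    rw [hF₂]
    apply Subfield.subset_closure
    left
    exact Set.mem_iUnion.2 ⟨i, n, rfl⟩
  -- the key induction: an lcm of the reduced denominators
  have key : ∀ s : Finset (Fin r),
      ∃ l : L[X], l ≠ 0 ∧ Mem l ∧ l ∣ p ∧ ∀ j ∈ s, b j ∣ l := by
    intro s
    induction s using Finset.induction with
    | empty => exact ⟨1, one_ne_zero, ⟨1, by simp⟩, one_dvd p, by simp⟩
    | @insert i s hi ih =>
      obtain ⟨l, hl0, hlm, hlp, hls⟩ := ih
      refine ⟨EuclideanDomain.lcm l (b i), ?_, memLcm _ _ hlm (memb i), ?_, ?_⟩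
      · rw [Ne, EuclideanDomain.lcm_eq_zero_iff]
        rintro (h | h)
        · exact hl0 h
        · exact hb0 i h
      · exact EuclideanDomain.lcm_dvd hlp ⟨g i, by rw [← hpb i, mul_comm]⟩
      · intro j hj
        rcases Finset.mem_insert.1 hj with h | h
        · rw [h]; exact EuclideanDomain.dvd_lcm_right _ _
        · exact (hls j h).trans (EuclideanDomain.dvd_lcm_left _ _)
  obtain ⟨l, hl0, hlm, hlp, hls⟩ := key Finset.univ
  -- p / l is a common divisor of p and all the q i, hence a unit
  obtain ⟨u, hu⟩ := hlp
  have hudvd : ∀ i, u ∣ g i := by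
    intro i
    obtain ⟨m, hm⟩ := hls i (Finset.mem_univ i)
    have : b i * g i = b i * (m * u) := by
      rw [mul_comm (b i) (g i), hpb i, hu, hm]; ring
    obtain h := mul_left_cancel₀ (hb0 i) this
    exact ⟨m, by rw [h, mul_comm]⟩
  have huunit : IsUnit u := by
    apply hgcd u ⟨l, by rw [hu, mul_comm]⟩
    intro i
    exact (hudvd i).trans (hgdvdq i)
  obtain ⟨c, hcu, hcC⟩ := Polynomial.isUnit_iff.1 huunit
  have hplc : p = l * C c := by rw [hu, hcC]
  -- the leading coefficient of l lies in F₂, hence so does c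
  have hlcF : l.leadingCoeff ∈ F₂ := memCoeff l hlm l.natDegree
  have hcinv : l.leadingCoeff * c = 1 := by
    have := hp.leadingCoeff
    rw [hplc, Polynomial.leadingCoeff_mul, Polynomial.leadingCoeff_C] at this
    exact this
  have hcF : c ∈ F₂ := by
    have : c = l.leadingCoeff⁻¹ := eq_inv_of_mul_eq_one_left (by rw [mul_comm] at hcinv; exact hcinv)
    rw [this]
    exact F₂.inv_mem hlcF
  have hpcoeff : ∀ n, p.coeff n ∈ F₂ := by
    intro n
    rw [hplc, Polynomial.coeff_mul_C]
    exact F₂.mul_mem (memCoeff l hlm n) hcF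
  refine ⟨hpcoeff, ?_⟩
  -- now the q i
  have memp : Mem p := coeffMem p hpcoeff
  have memg : ∀ i, Mem (g i) := by
    intro i
    have hbp : b i ∣ p := ⟨g i, by rw [← hpb i, mul_comm]⟩
    have h1 : b i * (p / b i) = p := EuclideanDomain.mul_div_cancel' (hb0 i) hbp
    have h2 : b i * g i = p := by rw [← hpb i, mul_comm]
    have : g i = p / b i := mul_left_cancel₀ (hb0 i) (by rw [h1, h2])
    rw [this]
    exact memDiv _ _ memp (memb i)
  intro i n
  have hqeq : g i * (q i / g i) = q i := EuclideanDomain.mul_div_cancel' (hg0 i) (hgdvdq i)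
  have : Mem (q i) := by
    rw [← hqeq]
    exact memMul _ _ (memg i) (mema i)
  exact memCoeff _ this n
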